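/- Define gray : ℕ → ℕ by gray(n) = n XOR (n >> 1). Then for every m ≥ 1 and every k with 0 ≤ k ≤ m − 1, the number of indices n with 0 ≤ n < 2^m − 1 such that gray(n) XOR gray(n+1) = 2^k equals 2^{m−1−k}. In particular, the least significant bit flips in exactly half of the 2^m − 1 transitions of the m-bit Gray code, and bit k flips in approximately a fraction 1/2^{k+1} of them. -/

import Mathlib

/-- The Gray code of `n`: `n XOR (n >> 1)`. -/
def gray (n : ℕ) : ℕ := n ^^^ (n >>> 1)

/-- The bit flipped at the transition `n → n+1`. -/
def F (n : ℕ) : ℕ := gray n ^^^ gray (n + 1)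

lemma F_even (m : ℕ) : F (2 * m) = 1 := by
  have h1 : (2 * m) >>> 1 = m := by omega
  have h2 : (2 * m + 1) >>> 1 = m := by omega
  unfold F gray
  rw [h1, h2]
  apply Nat.eq_of_testBit_eq
  intro i
  have d1 : (2 * m) / 2 = m := by omega
  have d2 : (2 * m + 1) / 2 = m := by omega
  have e1 : (2 * m) % 2 = 0 := by omega
  have e2 : (2 * m + 1) % 2 = 1 := by omega
  have d0 : (1 : ℕ) / 2 = 0 := rfl
  simp only [Nat.testBit_xor]
  cases i with
  | zero => simp [Nat.testBit_zero, e1, e2]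
  | succ j =>
    simp only [Nat.testBit_add_one, d1, d2, d0, Nat.zero_testBit]
    cases m.testBit j <;> cases (m / 2).testBit j <;> rfl

lemma F_odd (m : ℕ) : F (2 * m + 1) = 2 * F m := by
  have h1 : (2 * m + 1) >>> 1 = m := by omega
  have h2 : (2 * m + 1 + 1) >>> 1 = m + 1 := by omega
  unfold F gray
  rw [h1, h2, Nat.shiftRight_one, Nat.shiftRight_one]
  apply Nat.eq_of_testBit_eq
  intro i
  have d2 : (2 * m + 1) / 2 = m := by omega
  have d3 : (2 * m + 1 + 1) / 2 = m + 1 := by omega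
  have dd : ∀ x : ℕ, 2 * x / 2 = x := fun x => by omega
  have e1 : (2 * m + 1) % 2 = 1 := by omega
  have e2 : (2 * m + 1 + 1) % 2 = 0 := by omega
  have e3 : ∀ x : ℕ, (2 * x) % 2 = 0 := fun x => by omega
  simp only [Nat.testBit_xor]
  cases i with
  | zero => simp [Nat.testBit_zero, e1, e2, e3]; omega
  | succ j =>
    simp only [Nat.testBit_add_one, d2, d3, dd]
    simp only [Nat.testBit_xor, Nat.testBit_div_two]

lemma odd_mod (m P : ℕ) (hP : 0 < P) : (2 * m + 1) % (2 * P) = 2 * (m % P) + 1 := by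
  have h1 : 2 * m + 1 = (2 * (m % P) + 1) + (2 * P) * (m / P) := by
    have := Nat.div_add_mod m P
    ring_nf
    omega
  rw [h1, Nat.add_mul_mod_self_left, Nat.mod_eq_of_lt]
  have := Nat.mod_lt m hP
  omega

lemma even_mod (m P : ℕ) (hP : 0 < P) : (2 * m) % (2 * P) = 2 * (m % P) :=
  Nat.mul_mod_mul_left 2 m P

lemma F_pos (n : ℕ) : 0 < F n := by
  induction n using Nat.strong_induction_on with
  | _ n ih =>
    rcases Nat.even_or_odd n with ⟨m, hm⟩ | ⟨m, hm⟩
    · rw [hm, show m + m = 2 * m by ring, F_even]; omega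
    · rw [hm, F_odd]
      rcases Nat.eq_zero_or_pos m with h | h
      · subst h; rw [show (0:ℕ) = 2 * 0 from rfl, F_even]; omega
      · have := ih m (by omega); omega

lemma F_eq_pow_iff (k : ℕ) : ∀ n, F n = 2 ^ k ↔ n % 2 ^ (k + 1) = 2 ^ k - 1 := by
  induction k with
  | zero =>
    intro n
    rcases Nat.even_or_odd n with ⟨m, hm⟩ | ⟨m, hm⟩
    · rw [hm, show m + m = 2 * m by ring, F_even]
      norm_num
    · rw [hm, F_odd]
      have h1 := F_pos m
      norm_num
  | succ k ih =>
    intro n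
    have e : (2:ℕ) ^ (k + 1) = 2 * 2 ^ k := by ring
    have e2 : (2:ℕ) ^ (k + 1 + 1) = 2 * 2 ^ (k + 1) := by ring
    have hQ : 1 ≤ (2:ℕ) ^ k := Nat.one_le_two_pow
    have hP : 0 < (2:ℕ) ^ (k + 1) := Nat.pow_pos (by norm_num)
    rcases Nat.even_or_odd n with ⟨m, hm⟩ | ⟨m, hm⟩
    · rw [hm, show m + m = 2 * m by ring, F_even, e2,
        even_mod m _ hP]
      omega
    · rw [hm, F_odd, e2, odd_mod m _ hP]
      have := ih m
      omega

/-- In the `m`-bit Gray code, among the `2^m − 1` transitions `n → n+1` with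
`0 ≤ n < 2^m − 1`, exactly `2^(m−1−k)` of them flip bit `k`
(i.e. satisfy `gray n XOR gray (n+1) = 2^k`), for every `0 ≤ k ≤ m − 1`. -/
theorem gray_bitflip_count (m k : ℕ) (hm : 1 ≤ m) (hk : k ≤ m - 1) :
    ((Finset.range (2 ^ m - 1)).filter (fun n => gray n ^^^ gray (n + 1) = 2 ^ k)).card
      = 2 ^ (m - 1 - k) := by
  set t := m - 1 - k with ht
  set P := 2 ^ (k + 1) with hPdef
  set Q := 2 ^ k with hQdef
  have hQ1 : 1 ≤ Q := Nat.one_le_two_pow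
  have hPQ : P = 2 * Q := by rw [hPdef, hQdef]; ring
  have hP : 0 < P := by omega
  have hmm : m = (k + 1) + t := by omega
  have hpow : 2 ^ m = P * 2 ^ t := by rw [hmm, pow_add]
  have ht1 : 1 ≤ 2 ^ t := Nat.one_le_two_pow
  have key : ∀ n, (gray n ^^^ gray (n + 1) = Q) ↔ n % P = Q - 1 := fun n => F_eq_pow_iff k n
  rw [Finset.card_bij' (i := fun n _ => n / P) (j := fun j _ => P * j + (Q - 1))
    (t := Finset.range (2 ^ t))]
  · simp
  · -- hi : maps to range (2^t)
    intro n hn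
    simp only [Finset.mem_filter, Finset.mem_range] at hn ⊢
    have : n < P * 2 ^ t := by omega
    exact Nat.div_lt_of_lt_mul this
  · -- hj : maps into filter
    intro j hj
    simp only [Finset.mem_range] at hj
    simp only [Finset.mem_filter, Finset.mem_range, key]
    have hle : P * j + P ≤ P * 2 ^ t := by
      have := Nat.mul_le_mul_left P (show j + 1 ≤ 2 ^ t by omega)
      calc P * j + P = P * (j + 1) := by ring
        _ ≤ P * 2 ^ t := this
    constructor
    · omega
    · rw [Nat.mul_add_mod, Nat.mod_eq_of_lt (by omega)]
  · -- left inverse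
    intro n hn
    simp only [Finset.mem_filter, Finset.mem_range, key] at hn
    have := Nat.div_add_mod n P
    omega
  · -- right inverse
    intro j hj
    rw [Nat.mul_add_div hP, Nat.div_eq_of_lt (by omega)]
    omega
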